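/- Let X be a metric space and let B assign to every ordered pair of points (α, β) of X a set B(α, β) ⊆ X, with the property that for all points α, β, γ ∈ X, every point of B(α, β) lies within distance 2 of the union B(α, γ) ∪ B(γ, β). Let m and n be positive integers with 2^{n−1} < m ≤ 2^n. Then for every finite sequence of points x_0, x_1, …, x_m in X and every c ∈ B(x_0, x_m), there exists an index i with 0 ≤ i ≤ m − 1 and a point c* ∈ B(x_i, x_{i+1}) such that d(c, c*) ≤ 2n; in particular d(c, c*) ≤ 2⌈log₂ m⌉, where ⌈log₂ m⌉ is the least natural number n with m ≤ 2^n. -/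

import Mathlib

theorem bicorn_midpoint_aux
    {X : Type*} [MetricSpace X] (B : X → X → Set X)
    (hB : ∀ α β γ : X, ∀ c ∈ B α β, ∃ c' ∈ B α γ ∪ B γ β, dist c c' ≤ 2) :
    ∀ n m : ℕ, 0 < m → m ≤ 2 ^ n → ∀ x : ℕ → X, ∀ c ∈ B (x 0) (x m),
      ∃ i < m, ∃ cstar ∈ B (x i) (x (i + 1)), dist c cstar ≤ 2 * n := by
  intro n
  induction n with
  | zero =>
    intro m hm hle x c hc
    interval_cases m
    exact ⟨0, zero_lt_one, c, hc, by simp⟩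
  | succ n ih =>
    intro m hm hle x c hc
    by_cases hsmall : m ≤ 2 ^ n
    · obtain ⟨i, hi, cstar, hcs, hd⟩ := ih m hm hsmall x c hc
      exact ⟨i, hi, cstar, hcs, hd.trans (by push_cast; linarith)⟩
    · push_neg at hsmall
      obtain ⟨c', hc', hd⟩ := hB (x 0) (x m) (x (2 ^ n)) c hc
      rcases hc' with hc' | hc'
      · obtain ⟨i, hi, cstar, hcs, hd'⟩ :=
          ih (2 ^ n) (Nat.pow_pos two_pos) le_rfl x c' hc'
        refine ⟨i, hi.trans hsmall, cstar, hcs, ?_⟩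
        calc dist c cstar ≤ dist c c' + dist c' cstar := dist_triangle _ _ _
          _ ≤ 2 + 2 * n := by linarith
          _ = 2 * (n + 1 : ℕ) := by push_cast; ring
      · set y : ℕ → X := fun j => x (2 ^ n + j) with hy
        have hm' : 0 < m - 2 ^ n := Nat.sub_pos_of_lt hsmall
        have hle' : m - 2 ^ n ≤ 2 ^ n := by
          have : (2 : ℕ) ^ (n + 1) = 2 ^ n + 2 ^ n := by ring
          omega
        have hc'' : c' ∈ B (y 0) (y (m - 2 ^ n)) := by
          have : 2 ^ n + (m - 2 ^ n) = m := by omega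
          simpa [hy, this] using hc'
        obtain ⟨i, hi, cstar, hcs, hd'⟩ := ih (m - 2 ^ n) hm' hle' y c' hc''
        refine ⟨2 ^ n + i, by omega, cstar, by simpa [hy, Nat.add_assoc] using hcs, ?_⟩
        calc dist c cstar ≤ dist c c' + dist c' cstar := dist_triangle _ _ _
          _ ≤ 2 + 2 * n := by linarith
          _ = 2 * (n + 1 : ℕ) := by push_cast; ring


/-- Lemma 3.4 for an abstract family `B` of subsets of a metric space
satisfying the subdivision property: for positive integers `m, n` with
`2^(n-1) < m ≤ 2^n`, every sequence `x_0, …, x_m`, and every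
`c ∈ B (x 0) (x m)`, there is an index `i < m` and a point
`c* ∈ B (x i) (x (i+1))` with `dist c c* ≤ 2n`; in particular
`dist c c* ≤ 2 * ⌈log₂ m⌉`, where `Nat.clog 2 m` is the least natural
number `n` with `m ≤ 2 ^ n`. -/
theorem bicorn_midpoint
    {X : Type*} [MetricSpace X] (B : X → X → Set X)
    (hB : ∀ α β γ : X, ∀ c ∈ B α β, ∃ c' ∈ B α γ ∪ B γ β, dist c c' ≤ 2)
    (m n : ℕ) (hm : 0 < m) (hn : 0 < n)
    (h1 : 2 ^ (n - 1) < m) (h2 : m ≤ 2 ^ n) (x : ℕ → X)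
    (c : X) (hc : c ∈ B (x 0) (x m)) :
    ∃ i < m, ∃ cstar ∈ B (x i) (x (i + 1)),
      dist c cstar ≤ 2 * n ∧ dist c cstar ≤ 2 * Nat.clog 2 m := by
  obtain ⟨i, hi, cstar, hcs, hd⟩ := bicorn_midpoint_aux B hB n m hm h2 x c hc
  have hclog : Nat.clog 2 m ≤ n := (Nat.clog_le_iff_le_pow one_lt_two).mpr h2
  have hclog' : n ≤ Nat.clog 2 m := by
    by_contra h
    push_neg at h
    have := (Nat.clog_le_iff_le_pow one_lt_two).mp (by omega : Nat.clog 2 m ≤ n - 1)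
    omega
  have : Nat.clog 2 m = n := le_antisymm hclog hclog'
  exact ⟨i, hi, cstar, hcs, hd, by rw [this]; exact hd⟩
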